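/- Let σ > 0, γ ∈ [0,1], κ ∈ ℝ, T ≥ 1, m ∈ ℝ^T, and let α ≥ 2 be an integer. Then the Rényi divergence of order α between the T-dimensional mixture γ·N(κ·m, σ²·I_T) + (1−γ)·N(0, σ²·I_T) and N(0, σ²·I_T) equals the corresponding one-dimensional quantity with shift κ·‖m‖_2; explicitly, D_α( γ·N(κm, σ²I_T) + (1−γ)·N(0, σ²I_T) ‖ N(0, σ²I_T) ) = (1/(α−1)) · log( Σ_{ℓ=0}^{α} C(α,ℓ) · (1−γ)^{α−ℓ} · γ^ℓ · exp( ℓ(ℓ−1)·κ²·‖m‖_2² / (2σ²) ) ). -/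

import Mathlib

open MeasureTheory ProbabilityTheory Real
open scoped ENNReal NNReal Classical

/-- Rényi divergence of order `a` between measures `μ` and `ν`:
`(a-1)⁻¹ * log ∫ (dμ/dν)^a dν`, set to `⊤` when `μ` is not absolutely
continuous with respect to `ν`. -/
noncomputable def renyiDiv {E : Type*} [MeasurableSpace E] (a : ℝ) (μ ν : Measure E) : EReal :=
  if μ ≪ ν then (((a - 1)⁻¹ : ℝ) : EReal) * ENNReal.log (∫⁻ x, (μ.rnDeriv ν x) ^ a ∂ν)
  else ⊤

/-- Bernoulli(γ) distribution on ℝ, supported on {0, 1}. -/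
noncomputable def bern (γ : ℝ) : Measure ℝ :=
  ENNReal.ofReal γ • Measure.dirac 1 + ENNReal.ofReal (1 - γ) • Measure.dirac 0


theorem lintegral_pi_prod {n : ℕ} {E : Type*} [MeasurableSpace E]
    (ν : Fin n → Measure E) [∀ i, SigmaFinite (ν i)]
    (f : Fin n → E → ℝ≥0∞) (hf : ∀ i, Measurable (f i)) :
    ∫⁻ x : Fin n → E, ∏ i, f i (x i) ∂Measure.pi ν = ∏ i, ∫⁻ y, f i y ∂ν i := by
  induction n with
  | zero => simp
  | succ n ih =>
    have h := (measurePreserving_piFinSuccAbove ν 0).symm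
    rw [← h.lintegral_comp_emb (MeasurableEquiv.measurableEmbedding _)]
    simp_rw [MeasurableEquiv.piFinSuccAbove_symm_apply, Fin.insertNthEquiv,
      Fin.prod_univ_succ, Fin.insertNth_zero, Equiv.coe_fn_mk, Fin.cons_succ,
      Fin.zero_succAbove, Fin.cons_zero, cast_eq]
    rw [lintegral_prod_mul (f := f 0) (g := fun y : Fin n → E => ∏ i : Fin n, f i.succ (y i))
      (hf 0).aemeasurable
      (Finset.measurable_prod Finset.univ
        (fun i _ => (hf i.succ).comp (measurable_pi_apply i))).aemeasurable]
    rw [ih _ _ (fun i => hf i.succ)]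

theorem pi_withDensity' {n : ℕ} {E : Type*} [MeasurableSpace E]
    (ν : Fin n → Measure E) [∀ i, SigmaFinite (ν i)]
    (d : Fin n → E → ℝ≥0∞) (hd : ∀ i, Measurable (d i))
    [∀ i, SigmaFinite ((ν i).withDensity (d i))] :
    Measure.pi (fun i => (ν i).withDensity (d i)) =
      (Measure.pi ν).withDensity (fun x => ∏ i, d i (x i)) := by
  refine (Measure.pi_eq fun s hs => ?_)
  rw [withDensity_apply _ (MeasurableSet.univ_pi hs)]
  rw [← lintegral_indicator (MeasurableSet.univ_pi hs)]
  have : ∀ x : Fin n → E, (Set.pi Set.univ s).indicator (fun x => ∏ i, d i (x i)) x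
      = ∏ i, (s i).indicator (d i) (x i) := by
    intro x
    by_cases hx : x ∈ Set.pi Set.univ s
    · rw [Set.indicator_of_mem hx]
      exact Finset.prod_congr rfl fun i _ =>
        (Set.indicator_of_mem (hx i (Set.mem_univ i)) _).symm
    · rw [Set.indicator_of_notMem hx]
      have : ∃ i, x i ∉ s i := by
        by_contra hc
        push_neg at hc
        exact hx fun i _ => hc i
      obtain ⟨i, hi⟩ := this
      exact (Finset.prod_eq_zero (Finset.mem_univ i)
        (Set.indicator_of_notMem hi _)).symm
  simp_rw [this]
  rw [lintegral_pi_prod ν _ (fun i => (hd i).indicator (hs i))]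
  exact Finset.prod_congr rfl fun i _ =>
    ((withDensity_apply _ (hs i)).trans (lintegral_indicator (hs i) _).symm).symm

lemma rexp_quadratic_eq {b : ℝ} (hb : b < 0) (c d : ℝ) (x : ℝ) :
    rexp (b * x ^ 2 + c * x + d) =
      rexp (-(-b) * (x + c / (2 * b)) ^ 2) * rexp (d - c ^ 2 / (4 * b)) := by
  rw [← Real.exp_add]
  congr 1
  have hb' : b ≠ 0 := ne_of_lt hb
  field_simp
  ring

lemma integrable_rexp_quadratic {b : ℝ} (hb : b < 0) (c d : ℝ) :
    Integrable (fun x : ℝ => rexp (b * x ^ 2 + c * x + d)) := by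
  simp_rw [rexp_quadratic_eq hb c d]
  exact (((integrable_exp_neg_mul_sq (neg_pos.mpr hb)).comp_add_right
    (c / (2 * b)))).mul_const _

lemma integral_rexp_quadratic {b : ℝ} (hb : b < 0) (c d : ℝ) :
    ∫ x : ℝ, rexp (b * x ^ 2 + c * x + d)
      = Real.sqrt (π / -b) * rexp (d - c ^ 2 / (4 * b)) := by
  simp_rw [rexp_quadratic_eq hb c d]
  rw [MeasureTheory.integral_mul_const,
    MeasureTheory.integral_add_right_eq_self (fun x => rexp (-(-b) * x ^ 2)) (c / (2 * b)),
    integral_gaussian]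

lemma lintegral_rexp_gaussian (μ0 : ℝ) {v : ℝ≥0} (hv : v ≠ 0) (c d : ℝ) :
    ∫⁻ x, ENNReal.ofReal (rexp (c * x + d)) ∂gaussianReal μ0 v
      = ENNReal.ofReal (rexp (c * μ0 + v * c ^ 2 / 2 + d)) := by
  have hvpos : (0:ℝ) < v := lt_of_le_of_ne v.coe_nonneg (by exact_mod_cast (Ne.symm hv))
  have hb : (-(2 * (v:ℝ))⁻¹) < 0 := by
    rw [neg_lt_zero]
    positivity
  rw [gaussianReal_of_var_ne_zero μ0 hv,
    lintegral_withDensity_eq_lintegral_mul _ (measurable_gaussianPDF μ0 v)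
      (Measurable.ennreal_ofReal (by fun_prop : Measurable fun x : ℝ => rexp (c * x + d)))]
  have h1 : ∀ x : ℝ, (gaussianPDF μ0 v * fun x => ENNReal.ofReal (rexp (c * x + d))) x
      = ENNReal.ofReal ((√(2 * π * v))⁻¹ *
          rexp (-(2 * (v:ℝ))⁻¹ * x ^ 2 + (μ0 / v + c) * x + (d - μ0 ^ 2 / (2 * v)))) := by
    intro x
    simp only [Pi.mul_apply, gaussianPDF, gaussianPDFReal]
    rw [← ENNReal.ofReal_mul (by positivity)]
    congr 1
    rw [mul_assoc, ← Real.exp_add]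
    congr 2
    field_simp
    ring
  simp_rw [h1]
  rw [← ofReal_integral_eq_lintegral_ofReal
    ((integrable_rexp_quadratic hb _ _).const_mul _)
    (Filter.Eventually.of_forall fun x => by positivity)]
  rw [MeasureTheory.integral_const_mul, integral_rexp_quadratic hb]
  congr 1
  have hsq : √(2 * π * v) ≠ 0 := by positivity
  have h2 : π / -(-(2 * (v:ℝ))⁻¹) = 2 * π * v := by
    rw [neg_neg]
    field_simp
  rw [h2, ← mul_assoc, inv_mul_cancel₀ hsq, one_mul]
  congr 1
  field_simp
  ring

lemma gaussianReal_shift (μ0 : ℝ) {v : ℝ≥0} (hv : v ≠ 0) :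
    gaussianReal μ0 v = (gaussianReal 0 v).withDensity
      (fun x => ENNReal.ofReal (rexp (μ0 / v * x + -μ0 ^ 2 / (2 * v)))) := by
  have hvpos : (0:ℝ) < v := lt_of_le_of_ne v.coe_nonneg (by exact_mod_cast (Ne.symm hv))
  rw [gaussianReal_of_var_ne_zero μ0 hv, gaussianReal_of_var_ne_zero 0 hv,
    ← withDensity_mul _ (measurable_gaussianPDF 0 v)
      (Measurable.ennreal_ofReal (by fun_prop : Measurable fun x : ℝ =>
        rexp (μ0 / (v:ℝ) * x + -μ0 ^ 2 / (2 * (v:ℝ)))))]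
  congr 1
  ext x
  simp only [Pi.mul_apply, gaussianPDF, gaussianPDFReal]
  rw [← ENNReal.ofReal_mul (by positivity)]
  congr 1
  rw [mul_assoc (√(2 * π * (v:ℝ)))⁻¹, ← Real.exp_add]
  congr 2
  field_simp
  ring


theorem renyi_div_sparsified_gaussian_multidim_shift
    (σ γ κ : ℝ) (hσ : 0 < σ) (hγ0 : 0 ≤ γ) (hγ1 : γ ≤ 1)
    (T : ℕ) (hT : 1 ≤ T) (m : Fin T → ℝ)
    (α : ℕ) (hα : 2 ≤ α) :
    renyiDiv (α : ℝ)
      (ENNReal.ofReal γ • (Measure.pi fun t => gaussianReal (κ * m t) (Real.toNNReal (σ ^ 2))) +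
        ENNReal.ofReal (1 - γ) • (Measure.pi fun _ : Fin T => gaussianReal 0 (Real.toNNReal (σ ^ 2))))
      (Measure.pi fun _ : Fin T => gaussianReal 0 (Real.toNNReal (σ ^ 2))) =
    ((((α : ℝ) - 1)⁻¹ * Real.log (∑ ℓ ∈ Finset.range (α + 1),
        (α.choose ℓ : ℝ) * (1 - γ) ^ (α - ℓ) * γ ^ ℓ *
          Real.exp ((ℓ : ℝ) * ((ℓ : ℝ) - 1) * κ ^ 2 * (∑ t, m t ^ 2) / (2 * σ ^ 2))) : ℝ) : EReal) := by
  classical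
  set v : ℝ≥0 := Real.toNNReal (σ ^ 2) with hvdef
  have hσ2 : (0:ℝ) < σ ^ 2 := by positivity
  have hvσ : (v:ℝ) = σ ^ 2 := Real.coe_toNNReal _ hσ2.le
  have hv : v ≠ 0 := by
    intro h
    rw [h] at hvσ
    exact absurd hvσ.symm (ne_of_gt (by simpa using hσ2))
  set ν : Measure (Fin T → ℝ) := Measure.pi fun _ : Fin T => gaussianReal 0 v with hνdef
  set d : Fin T → ℝ → ℝ≥0∞ := fun t x =>
    ENNReal.ofReal (rexp ((κ * m t) / v * x + -(κ * m t) ^ 2 / (2 * v))) with hddef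
  have hd : ∀ t, Measurable (d t) := fun t =>
    ((measurable_const.mul measurable_id').add measurable_const).exp.ennreal_ofReal
  set D : (Fin T → ℝ) → ℝ≥0∞ := fun x => ∏ t, d t (x t) with hDdef
  have hDmeas : Measurable D :=
    Finset.measurable_prod _ fun t _ => (hd t).comp (measurable_pi_apply t)
  have h1 : ∀ t : Fin T, gaussianReal (κ * m t) v = (gaussianReal 0 v).withDensity (d t) :=
    fun t => gaussianReal_shift _ hv
  have hpi : (Measure.pi fun t => gaussianReal (κ * m t) v) = ν.withDensity D := by
    haveI : ∀ t : Fin T, SigmaFinite ((gaussianReal 0 v).withDensity (d t)) := fun t => by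
      rw [← h1 t]; infer_instance
    rw [show (fun t => gaussianReal (κ * m t) v)
        = fun t => (gaussianReal 0 v).withDensity (d t) from funext h1]
    exact pi_withDensity' _ d hd
  set g : (Fin T → ℝ) → ℝ≥0∞ := fun x => ENNReal.ofReal γ * D x + ENNReal.ofReal (1 - γ)
    with hgdef
  have hgmeas : Measurable g := (hDmeas.const_mul _).add measurable_const
  have hμ : ENNReal.ofReal γ • (Measure.pi fun t => gaussianReal (κ * m t) v)
      + ENNReal.ofReal (1 - γ) • ν = ν.withDensity g := by
    rw [hpi, ← withDensity_smul _ hDmeas, ← withDensity_const (μ := ν) (ENNReal.ofReal (1 - γ)),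
      ← withDensity_add_left (hDmeas.const_smul _)]
    congr 1
  have hGk : ∀ k : ℕ, ∫⁻ x, D x ^ k ∂ν
      = ENNReal.ofReal (rexp ((k:ℝ) * ((k:ℝ) - 1) * κ ^ 2 * (∑ t, m t ^ 2) / (2 * σ ^ 2))) := by
    intro k
    have hDk : ∀ x : Fin T → ℝ, D x ^ k = ∏ t, ENNReal.ofReal
        (rexp (((k:ℝ) * ((κ * m t) / v)) * (x t) + (k:ℝ) * (-(κ * m t) ^ 2 / (2 * v)))) := by
      intro x
      simp only [hDdef, hddef, ← Finset.prod_pow]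
      refine Finset.prod_congr rfl fun t _ => ?_
      rw [← ENNReal.ofReal_pow (Real.exp_nonneg _), ← Real.exp_nat_mul, mul_add, ← mul_assoc]
    simp_rw [hDk]
    rw [hνdef, lintegral_pi_prod _ _ (fun t =>
      Measurable.ennreal_ofReal (by fun_prop : Measurable fun y : ℝ =>
        rexp (((k:ℝ) * ((κ * m t) / v)) * y + (k:ℝ) * (-(κ * m t) ^ 2 / (2 * v)))))]
    have hint : ∀ t : Fin T, (∫⁻ y, ENNReal.ofReal
        (rexp (((k:ℝ) * ((κ * m t) / v)) * y + (k:ℝ) * (-(κ * m t) ^ 2 / (2 * v)))) ∂gaussianReal 0 v)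
        = ENNReal.ofReal (rexp ((k:ℝ) * ((k:ℝ) - 1) * κ ^ 2 * (m t ^ 2) / (2 * σ ^ 2))) := by
      intro t
      rw [lintegral_rexp_gaussian 0 hv]
      congr 2
      rw [hvσ]
      field_simp
      ring
    rw [Finset.prod_congr rfl fun t _ => hint t,
      ← ENNReal.ofReal_prod_of_nonneg (fun t _ => (Real.exp_nonneg _)), ← Real.exp_sum]
    congr 2
    rw [Finset.mul_sum, Finset.sum_div]
  set S : ℝ := ∑ ℓ ∈ Finset.range (α + 1),
      (α.choose ℓ : ℝ) * (1 - γ) ^ (α - ℓ) * γ ^ ℓ *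
        Real.exp ((ℓ : ℝ) * ((ℓ : ℝ) - 1) * κ ^ 2 * (∑ t, m t ^ 2) / (2 * σ ^ 2)) with hSdef
  have h1γ : (0:ℝ) ≤ 1 - γ := sub_nonneg.mpr hγ1
  have hexp1 : ∀ k : ℕ,
      1 ≤ rexp ((k:ℝ) * ((k:ℝ) - 1) * κ ^ 2 * (∑ t, m t ^ 2) / (2 * σ ^ 2)) := by
    intro k
    apply Real.one_le_exp
    apply div_nonneg _ (by positivity)
    apply mul_nonneg (mul_nonneg ?_ (sq_nonneg κ)) (Finset.sum_nonneg fun t _ => sq_nonneg _)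
    rcases Nat.eq_zero_or_pos k with h|h
    · simp [h]
    · have hk1 : (1:ℝ) ≤ (k:ℝ) := by exact_mod_cast h
      nlinarith
  have hS1 : (1:ℝ) ≤ S := by
    have hadd := add_pow γ (1 - γ) α
    have hone : γ + (1 - γ) = 1 := by ring
    rw [hone, one_pow] at hadd
    rw [hadd, hSdef]
    apply Finset.sum_le_sum
    intro k hk
    have h0 : 0 ≤ (α.choose k : ℝ) * (1 - γ) ^ (α - k) * γ ^ k := by positivity
    calc γ ^ k * (1 - γ) ^ (α - k) * (α.choose k : ℝ)
        = (α.choose k : ℝ) * (1 - γ) ^ (α - k) * γ ^ k * 1 := by ring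
      _ ≤ _ := mul_le_mul_of_nonneg_left (hexp1 k) h0
  have hSpos : 0 < S := lt_of_lt_of_le one_pos hS1
  have hcalc : ∫⁻ x, g x ^ ((α:ℕ):ℝ) ∂ν = ENNReal.ofReal S := by
    simp_rw [ENNReal.rpow_natCast]
    have hexp : ∀ x : Fin T → ℝ, g x ^ α = ∑ k ∈ Finset.range (α + 1),
        ((ENNReal.ofReal γ) ^ k * (ENNReal.ofReal (1 - γ)) ^ (α - k)
          * (α.choose k : ℝ≥0∞)) * D x ^ k := by
      intro x
      simp only [hgdef]
      rw [add_pow]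
      exact Finset.sum_congr rfl fun k _ => by rw [mul_pow]; ring
    simp_rw [hexp]
    rw [lintegral_finset_sum _ (fun k _ => (hDmeas.pow_const k).const_mul _)]
    have hterm : ∀ k ∈ Finset.range (α + 1),
        ∫⁻ x, ((ENNReal.ofReal γ) ^ k * (ENNReal.ofReal (1 - γ)) ^ (α - k)
          * (α.choose k : ℝ≥0∞)) * D x ^ k ∂ν
        = ENNReal.ofReal ((α.choose k : ℝ) * (1 - γ) ^ (α - k) * γ ^ k *
            rexp ((k:ℝ) * ((k:ℝ) - 1) * κ ^ 2 * (∑ t, m t ^ 2) / (2 * σ ^ 2))) := by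
      intro k _
      rw [lintegral_const_mul _ (hDmeas.pow_const k), hGk k,
        ← ENNReal.ofReal_pow hγ0, ← ENNReal.ofReal_pow h1γ, ← ENNReal.ofReal_natCast,
        ← ENNReal.ofReal_mul (by positivity), ← ENNReal.ofReal_mul (by positivity),
        ← ENNReal.ofReal_mul (by positivity)]
      congr 1
      ring
    rw [Finset.sum_congr rfl hterm,
      ← ENNReal.ofReal_sum_of_nonneg (fun k _ => by positivity), hSdef]
  rw [hμ, renyiDiv, if_pos (withDensity_absolutelyContinuous _ _)]
  have hae : (fun x => ((ν.withDensity g).rnDeriv ν x) ^ ((α:ℕ):ℝ))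
      =ᵐ[ν] (fun x => g x ^ ((α:ℕ):ℝ)) :=
    (Measure.rnDeriv_withDensity ν hgmeas).mono fun x hx => by
      show ((ν.withDensity g).rnDeriv ν x) ^ ((α:ℕ):ℝ) = g x ^ ((α:ℕ):ℝ)
      rw [hx]
  have hlint : ∫⁻ x, ((ν.withDensity g).rnDeriv ν x) ^ ((α:ℕ):ℝ) ∂ν
      = ∫⁻ x, g x ^ ((α:ℕ):ℝ) ∂ν :=
    lintegral_congr_ae hae
  rw [hlint, hcalc, ENNReal.log_ofReal_of_pos hSpos, ← EReal.coe_mul]
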